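/- Let F be a field, E ≤ F^m a subspace, and suppose e_1 ∈ E. Let A_i = {i, ..., i+s-1} (mod m), 1 ≤ s < m - 1, and suppose the valid-code conditions hold (decodability of exactly one new message per user and privacy). Then every user i ∈ {2, ..., m-s+1} (those with 1 ∉ A_i) must have desired index d_i = 1. -/
import Mathlib


/-- First step of Proposition 1: if `e_1` lies in the code span `E` of a valid private code
with side information sets `A i = {i, …, i+s-1}` (mod `m`), then every user `i ∈ {2, …, m-s+1}`
must have desired index `d i = 1`. -/
theorem stmt_19 (F : Type*) [Field F] (m s : ℕ) (hs1 : 1 ≤ s) (hsm : s < m - 1)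
    (A : ZMod m → Set (ZMod m))
    (hA : ∀ i, A i = {j | ∃ a : ℕ, a < s ∧ j = i + (a : ZMod m)})
    (E : Submodule F (ZMod m → F)) (d : ZMod m → ZMod m)
    (he1 : Pi.single ((1 : ℕ) : ZMod m) (1 : F) ∈ E)
    (hdec : ∀ i, d i ∉ A i ∧ ∃ v ∈ E, v (d i) ≠ 0 ∧ ∀ j, v j ≠ 0 → j ∈ A i ∪ {d i})
    (hpriv : ∀ i, ∀ j ∉ A i ∪ {d i},
      ¬ ∃ v ∈ E, v j ≠ 0 ∧ ∀ t, v t ≠ 0 → t ∈ A i ∪ {j}) :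
    ∀ i : ℕ, 2 ≤ i → i ≤ m - s + 1 → d ((i : ℕ) : ZMod m) = ((1 : ℕ) : ZMod m) := by
  intro i hi2 him
  have hm3 : 3 ≤ m := by omega
  have hmne : NeZero m := ⟨by omega⟩
  -- 1 ∉ A i
  have h1A : ((1 : ℕ) : ZMod m) ∉ A ((i : ℕ) : ZMod m) := by
    rw [hA]
    rintro ⟨a, ha, hja⟩
    rw [← Nat.cast_add] at hja
    have := (ZMod.natCast_eq_natCast_iff 1 (i + a) m).mp hja
    have h1 : 1 % m = 1 := Nat.mod_eq_of_lt (by omega)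
    have h2 : (i + a) % m = 1 := by rw [Nat.ModEq] at this; omega
    rcases Nat.lt_or_ge (i + a) m with h | h
    · rw [Nat.mod_eq_of_lt h] at h2; omega
    · have : i + a ≤ m := by omega
      have : i + a = m := by omega
      rw [this, Nat.mod_self] at h2; omega
  by_contra hne
  refine hpriv ((i : ℕ) : ZMod m) ((1 : ℕ) : ZMod m) ?_ ?_
  · rintro (h | h)
    · exact h1A h
    · exact hne (by simpa using h.symm)
  · refine ⟨Pi.single ((1 : ℕ) : ZMod m) (1 : F), he1, by simp, ?_⟩
    intro t ht
    right
    by_contra htne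
    exact ht (Pi.single_eq_of_ne htne 1)
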